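/- Let N be cyclic of order p^e with p an odd prime and e ≥ 1. Then every transitive subgroup G of Hol(N) (acting naturally on N) contains an element of order p^e. -/

import Mathlib

/-- The holomorph `Hol(N) = N ⋊ Aut(N)`. -/
abbrev Hol (N : Type*) [Group N] : Type _ :=
  N ⋊[MonoidHom.id (MulAut N)] MulAut N

/-- The natural action of `Hol(N)` on `N`: `(n, φ) • x = n · φ(x)`. -/
def holAct {N : Type*} [Group N] (g : Hol N) (x : N) : N :=
  g.left * g.right x

/-- A subgroup of `Hol(N)` is transitive if its natural action on `N` is transitive. -/
def IsTransitiveSub {N : Type*} [Group N] (G : Subgroup (Hol N)) : Prop :=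
  ∀ x y : N, ∃ g ∈ G, holAct g x = y

section Aux

open SemidirectProduct Finset

variable {N : Type*} [Group N]

lemma hol_right_pow (g : Hol N) (k : ℕ) : (g ^ k).right = g.right ^ k := by
  have : (g ^ k).right = rightHom (g ^ k) := rfl
  rw [this, map_pow]; rfl

lemma hol_left_pow (g : Hol N) {m : ℤ} (hm : ∀ x : N, g.right x = x ^ m) (k : ℕ) :
    (g ^ k).left = g.left ^ (∑ i ∈ Finset.range k, m ^ i) := by
  induction k with
  | zero => simp
  | succ k ih =>
    rw [pow_succ', mul_left, ih]
    simp only [MonoidHom.id_apply]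
    rw [hm, ← zpow_mul, geom_sum_succ, ← zpow_one_add]
    congr 1
    ring

lemma hol_aut_pow (g : Hol N) {m : ℤ} (hm : ∀ x : N, g.right x = x ^ m) (k : ℕ) (x : N) :
    (g.right ^ k) x = x ^ (m ^ k) := by
  induction k with
  | zero => simp
  | succ k ih =>
    rw [pow_succ, MulAut.mul_apply, hm, map_zpow, ih, ← zpow_mul, ← pow_succ]

lemma le_exponent_of_gen [IsCyclic N] {p e a : ℕ} (hp : p.Prime)
    (hodd : Odd p) (he : 1 ≤ e) (hcard : Nat.card N = p ^ e) (g : Hol N)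
    (hgen : orderOf g.left = p ^ e) (hord : orderOf g = p ^ a) : e ≤ a := by
  haveI : Fact p.Prime := ⟨hp⟩
  by_contra hlt
  push_neg at hlt
  have hg1 : g ^ p ^ (e - 1) = 1 := by
    rw [← orderOf_dvd_iff_pow_eq_one, hord]
    exact pow_dvd_pow p (by omega)
  obtain ⟨m, hm'⟩ := MonoidHom.map_cyclic (MulEquiv.toMonoidHom g.right)
  have hm : ∀ x : N, g.right x = x ^ m := fun x => hm' x
  set T : ℤ := ∑ i ∈ Finset.range (p ^ (e - 1)), m ^ i with hT
  have hTdvd : ((p : ℤ)) ^ e ∣ T := by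
    have h1 := hol_left_pow g hm (p ^ (e - 1))
    rw [hg1, one_left] at h1
    have h2 : g.left ^ T = 1 := h1.symm
    rw [← orderOf_dvd_iff_zpow_eq_one, hgen] at h2
    exact_mod_cast h2
  have hright : g.right ^ p ^ a = 1 := by
    have h1 : (g ^ p ^ a).right = g.right ^ p ^ a := hol_right_pow g _
    have h2 : g ^ p ^ a = 1 := by rw [← hord]; exact pow_orderOf_eq_one g
    rw [h2, one_right] at h1
    exact h1.symm
  have hme : ((p : ℤ)) ^ e ∣ m ^ p ^ a - 1 := by
    have hx := hol_aut_pow g hm (p ^ a) g.left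
    rw [hright] at hx
    have hx' : g.left ^ (m ^ p ^ a - 1) = 1 := by
      rw [zpow_sub, zpow_one, ← hx, MulAut.one_apply, mul_inv_cancel]
    rw [← orderOf_dvd_iff_zpow_eq_one, hgen] at hx'
    exact_mod_cast hx'
  have hp1 : (p : ℤ) ∣ m - 1 := by
    have hdvd : (p : ℤ) ∣ m ^ p ^ a - 1 :=
      dvd_trans (dvd_pow_self (p : ℤ) (by omega)) hme
    have hz : ((m : ZMod p)) ^ p ^ a = 1 := by
      have h := (ZMod.intCast_zmod_eq_zero_iff_dvd (m ^ p ^ a - 1) p).2 hdvd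
      push_cast at h
      exact sub_eq_zero.mp h
    have hne : ((m : ℤ) : ZMod p) ≠ 0 := by
      intro h0
      rw [h0, zero_pow (pow_ne_zero a hp.pos.ne')] at hz
      exact zero_ne_one hz
    have h2 : orderOf ((m : ℤ) : ZMod p) ∣ p ^ a := orderOf_dvd_of_pow_eq_one hz
    have h3 : orderOf ((m : ℤ) : ZMod p) ∣ p - 1 :=
      orderOf_dvd_of_pow_eq_one (ZMod.pow_card_sub_one_eq_one hne)
    have hcop : Nat.Coprime (p ^ a) (p - 1) := by
      exact Nat.Coprime.pow_left _
        (Nat.coprime_of_lt_prime (by have := hp.two_le; omega) (by have := hp.two_le; omega) hp)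
    have h4 : orderOf ((m : ℤ) : ZMod p) = 1 :=
      Nat.dvd_one.mp (hcop ▸ Nat.dvd_gcd h2 h3)
    have h5 : ((m : ℤ) : ZMod p) = 1 := orderOf_eq_one_iff.mp h4
    have h6 : ((m - 1 : ℤ) : ZMod p) = 0 := by push_cast [h5]; ring
    exact (ZMod.intCast_zmod_eq_zero_iff_dvd _ p).1 h6
  have hppr : Prime ((p : ℤ)) := Nat.prime_iff_prime_int.mp hp
  by_cases hm1 : m = 1
  · rw [hm1] at hT
    simp only [one_pow, Finset.sum_const, Finset.card_range, nsmul_eq_mul, mul_one] at hT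
    rw [hT] at hTdvd
    have h7 : p ^ e ∣ p ^ (e - 1) := by exact_mod_cast hTdvd
    have h8 : p ^ e ≤ p ^ (e - 1) := Nat.le_of_dvd (pow_pos hp.pos _) h7
    have h9 : p ^ (e - 1) < p ^ e := Nat.pow_lt_pow_right hp.one_lt (by omega)
    omega
  · have hmne : m - 1 ≠ 0 := sub_ne_zero.2 hm1
    have hpm : ¬ (p : ℤ) ∣ m := by
      intro h
      have h8 : (p : ℤ) ∣ 1 := by
        have h9 := dvd_sub h hp1
        simpa using h9
      exact hppr.not_isUnit (isUnit_of_dvd_one h8)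
    have hfin : FiniteMultiplicity ((p : ℤ)) (m - 1) :=
      Int.finiteMultiplicity_iff.2 ⟨by simp [Int.natAbs_natCast, hp.ne_one], hmne⟩
    have lte := Int.emultiplicity_pow_sub_pow hp hodd (by simpa using hp1) hpm (p ^ (e - 1))
    rw [one_pow] at lte
    have hgs : T * (m - 1) = m ^ p ^ (e - 1) - 1 := geom_sum_mul m _
    have hmul : emultiplicity ((p : ℤ)) (T * (m - 1)) =
        emultiplicity ((p : ℤ)) T + emultiplicity ((p : ℤ)) (m - 1) := emultiplicity_mul hppr
    have hpe1 : emultiplicity p (p ^ (e - 1)) = ((e - 1 : ℕ) : ℕ∞) :=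
      Nat.Prime.emultiplicity_pow_self hp
    rw [hgs, lte, hpe1] at hmul
    have hle : ((e : ℕ)  : ℕ∞) ≤ emultiplicity ((p : ℤ)) T := le_emultiplicity_of_pow_dvd hTdvd
    have hAne : emultiplicity ((p : ℤ)) (m - 1) ≠ ⊤ := finiteMultiplicity_iff_emultiplicity_ne_top.1 hfin
    have hfinal : emultiplicity ((p : ℤ)) (m - 1) + ((e : ℕ) : ℕ∞) ≤
        emultiplicity ((p : ℤ)) (m - 1) + ((e - 1 : ℕ) : ℕ∞) := by
      calc emultiplicity ((p : ℤ)) (m - 1) + ((e : ℕ) : ℕ∞)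
          = ((e : ℕ) : ℕ∞) + emultiplicity ((p : ℤ)) (m - 1) := add_comm _ _
        _ ≤ emultiplicity ((p : ℤ)) T + emultiplicity ((p : ℤ)) (m - 1) :=
            add_le_add_left hle _
        _ = emultiplicity ((p : ℤ)) (m - 1) + ((e - 1 : ℕ) : ℕ∞) := hmul.symm
    have h10 : ((e : ℕ) : ℕ∞) ≤ ((e - 1 : ℕ) : ℕ∞) :=
      (WithTop.add_le_add_iff_left hAne).1 hfinal
    have h11 : e ≤ e - 1 := by exact_mod_cast h10
    omega

end Aux

lemma pow_dvd_le_exp {p : ℕ} (hp : 1 < p) {i j : ℕ} (h : p ^ i ∣ p ^ j) : i ≤ j := by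
  by_contra hc
  push_neg at hc
  have h1 := Nat.le_of_dvd (Nat.pow_pos (n := j) (by omega)) h
  have h2 := Nat.pow_lt_pow_right hp hc
  omega

def holMulAction (N : Type*) [Group N] : MulAction (Hol N) N where
  smul := holAct
  one_smul x := by
    show holAct 1 x = x
    simp [holAct, SemidirectProduct.one_left, SemidirectProduct.one_right]
  mul_smul g h x := by
    show holAct (g * h) x = holAct g (holAct h x)
    simp [holAct, SemidirectProduct.mul_left, SemidirectProduct.mul_right, mul_assoc]

/-- Let `N` be cyclic of order `p^e` (`p` an odd prime, `e ≥ 1`).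
Every transitive subgroup `G` of `Hol(N)` contains an element of order `p^e`. -/
theorem transitive_has_elt_of_full_order_odd {N : Type*} [Group N]
    (p e : ℕ) (hp : p.Prime) (hodd : Odd p) (he : 1 ≤ e)
    [IsCyclic N] (hcard : Nat.card N = p ^ e)
    (G : Subgroup (Hol N)) (hG : IsTransitiveSub G) :
    ∃ g ∈ G, orderOf g = p ^ e := by
  haveI : Fact p.Prime := ⟨hp⟩
  haveI hNfin : Finite N :=
    Nat.finite_of_card_ne_zero (by rw [hcard]; exact (pow_pos hp.pos e).ne')
  haveI : Finite (MulAut N) :=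
    Finite.of_injective (fun f => (f : N → N)) DFunLike.coe_injective
  haveI : Finite (Hol N) :=
    Finite.of_injective (fun g : Hol N => (g.left, g.right))
      (fun a b h => by
        obtain ⟨h1, h2⟩ := Prod.ext_iff.mp h
        exact SemidirectProduct.ext h1 h2)
  letI := holMulAction N
  haveI : MulAction.IsPretransitive ↥G N :=
    ⟨fun x y => by
      obtain ⟨g, hgG, hgxy⟩ := hG x y
      exact ⟨⟨g, hgG⟩, hgxy⟩⟩
  set H := MulAction.stabilizer ↥G (1 : N) with hH
  have hHidx : H.index = p ^ e := by
    rw [hH, MulAction.index_stabilizer_of_transitive, hcard]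
  have hcG : Nat.card ↥G = Nat.card ↥H * p ^ e := by
    rw [← hHidx, Subgroup.card_mul_index]
  have hH0 : Nat.card ↥H ≠ 0 := Nat.card_pos.ne'
  -- Sylow p-subgroup of the stabilizer, extended to a Sylow p-subgroup of G
  obtain ⟨Q⟩ : Nonempty (Sylow p ↥H) := inferInstance
  set mH := (Nat.card ↥H).factorization p with hmH
  have hQcard : Nat.card ↥Q = p ^ mH := Q.card_eq_multiplicity
  have hQ' : IsPGroup p ↥((Q : Subgroup ↥H).map H.subtype) := Q.isPGroup'.map _
  obtain ⟨P, hQP⟩ := hQ'.exists_le_sylow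
  set n := (Nat.card ↥G).factorization p with hn
  have hPcard : Nat.card ↥(P : Subgroup ↥G) = p ^ n := P.card_eq_multiplicity
  have hne : n = mH + e := by
    rw [hn, hcG, Nat.factorization_mul hH0 (pow_pos hp.pos e).ne', Finsupp.add_apply,
      hp.factorization_pow, Finsupp.single_eq_same]
  -- the stabilizer of 1 in P
  have hstab : MulAction.stabilizer ↥(P : Subgroup ↥G) (1 : N)
      = H.subgroupOf (P : Subgroup ↥G) := rfl
  have hstabcard : Nat.card ↥(H.subgroupOf (P : Subgroup ↥G))
      = Nat.card ↥(H ⊓ (P : Subgroup ↥G)) := by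
    rw [← Subgroup.inf_subgroupOf_right]
    exact Nat.card_congr (Subgroup.subgroupOfEquivOfLe inf_le_right).toEquiv
  have hpg : IsPGroup p ↥(H.subgroupOf (P : Subgroup ↥G)) :=
    IsPGroup.to_subgroup P.isPGroup' _
  obtain ⟨j, hj⟩ := (IsPGroup.iff_card).mp hpg
  have hjm : j ≤ mH := by
    have h1 : p ^ j ∣ Nat.card ↥H := by
      rw [← hj, hstabcard]
      exact Subgroup.card_dvd_of_le inf_le_left
    have h2 : p ^ j ∣ p ^ mH * (Nat.card ↥H / p ^ mH) := by
      rwa [hmH, Nat.ordProj_mul_ordCompl_eq_self]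
    have h3 : Nat.Coprime (p ^ j) (Nat.card ↥H / p ^ mH) :=
      Nat.Coprime.pow_left _
        ((Nat.Prime.coprime_iff_not_dvd hp).2 (by rw [hmH]; exact Nat.not_dvd_ordCompl hp hH0))
    exact pow_dvd_le_exp hp.one_lt (h3.dvd_of_dvd_mul_right h2)
  have hjn : j ≤ n := le_trans hjm (by omega)
  -- the orbit of 1 under P is everything
  have hidx : (MulAction.stabilizer ↥(P : Subgroup ↥G) (1 : N)).index = p ^ (n - j) := by
    have h4 : (MulAction.stabilizer ↥(P : Subgroup ↥G) (1 : N)).index * p ^ j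
        = p ^ (n - j) * p ^ j := by
      rw [← pow_add]
      have h5 : n - j + j = n := by omega
      rw [h5, ← hPcard, ← hj, ← hstab, Subgroup.index_mul_card]
    exact Nat.eq_of_mul_eq_mul_right (pow_pos hp.pos _) h4
  have horb : (MulAction.orbit ↥(P : Subgroup ↥G) (1 : N)).ncard = p ^ (n - j) := by
    rw [← MulAction.index_stabilizer, hidx]
  have hset : MulAction.orbit ↥(P : Subgroup ↥G) (1 : N) = Set.univ := by
    apply Set.eq_of_subset_of_ncard_le (Set.subset_univ _) _ (Set.finite_univ)
    rw [horb, Set.ncard_univ, hcard]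
    exact Nat.pow_le_pow_right hp.pos (by omega)
  -- a generator of N
  obtain ⟨n₀, hn₀⟩ := IsCyclic.exists_generator (α := N)
  have hn₀ord : orderOf n₀ = p ^ e := by
    rw [orderOf_eq_card_of_forall_mem_zpowers hn₀, hcard]
  have hmem : n₀ ∈ MulAction.orbit ↥(P : Subgroup ↥G) (1 : N) := by
    rw [hset]; trivial
  obtain ⟨x, hx⟩ := hmem
  set g : Hol N := ((x : ↥G) : Hol N) with hg
  have hgG : g ∈ G := (x : ↥G).2
  have hleft : g.left = n₀ := by
    have h6 : holAct g 1 = n₀ := hx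
    simpa [holAct] using h6
  obtain ⟨k, hk⟩ := P.isPGroup' x
  obtain ⟨a, ha, hax⟩ := (Nat.dvd_prime_pow hp).1 (orderOf_dvd_of_pow_eq_one hk)
  have hgord : orderOf g = p ^ a := by
    rw [hg, Subgroup.orderOf_coe, Subgroup.orderOf_coe, hax]
  have hea : e ≤ a :=
    le_exponent_of_gen hp hodd he hcard g (by rw [hleft]; exact hn₀ord) hgord
  refine ⟨g ^ p ^ (a - e), G.pow_mem hgG _, ?_⟩
  rw [orderOf_pow, hgord, Nat.gcd_eq_right (pow_dvd_pow p (by omega)),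
    Nat.pow_div (by omega) hp.pos]
  congr 1
  omega
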